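/- Let d ≥ 1 and m_j = ⌈log₂ d_j⌉. Define B_{m,d} = {0, ±1, ±2^{-1/2}, …, ±2^{-m/2}}^d ∩ {u ∈ ℝ^d : ‖u‖ ≤ 1}. Then |B_{m_j,d_j}| ≤ exp((21/4)·d_j). Consequently, for d = d1+d2+d3, |B_{m1,d1}|·|B_{m2,d2}|·|B_{m3,d3}| ≤ e^{(21/4)d}. -/

import Mathlib

noncomputable def enorm {d : ℕ} (u : Fin d → ℝ) : ℝ := Real.sqrt (∑ i, (u i)^2)

def digitBall (m d : ℕ) : Set (Fin d → ℝ) :=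
  {u | _root_.enorm u ≤ 1 ∧
    ∀ i, u i = 0 ∨ ∃ ℓ : ℕ, ℓ ≤ m ∧ |u i| = ((2 : ℝ) ^ ℓ)⁻¹ ^ ((1 : ℝ) / 2)}

/-- decode a digit back to a real number -/
noncomputable def digitDec {m : ℕ} : Option (Fin (m + 1) × Bool) → ℝ
  | none => 0
  | some (ℓ, b) => (if b then 1 else -1) * ((2 : ℝ) ^ (ℓ : ℕ))⁻¹ ^ ((1 : ℝ) / 2)

/-- weight of a digit -/
noncomputable def digitW (c : ℝ) {m : ℕ} : Option (Fin (m + 1) × Bool) → ℝ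
  | none => 1
  | some (ℓ, _) => Real.exp (-c * ((2 : ℝ) ^ (ℓ : ℕ))⁻¹)

/-- code of a vector: the digit of each coordinate -/
noncomputable def digitCode (m : ℕ) {d : ℕ} (u : Fin d → ℝ) (i : Fin d) :
    Option (Fin (m + 1) × Bool) :=
  if h : u i ≠ 0 ∧ ∃ ℓ : ℕ, ℓ ≤ m ∧ |u i| = ((2 : ℝ) ^ ℓ)⁻¹ ^ ((1 : ℝ) / 2)
  then some (⟨h.2.choose, Nat.lt_succ_of_le h.2.choose_spec.1⟩, decide (0 < u i))
  else none

lemma digitCode_dec {m d : ℕ} {u : Fin d → ℝ} (hu : u ∈ digitBall m d) (i : Fin d) :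
    digitDec (digitCode m u i) = u i := by
  by_cases h0 : u i = 0
  · simp [digitCode, h0, digitDec]
  · have hex : ∃ ℓ : ℕ, ℓ ≤ m ∧ |u i| = ((2 : ℝ) ^ ℓ)⁻¹ ^ ((1 : ℝ) / 2) :=
      (hu.2 i).resolve_left h0
    have h : u i ≠ 0 ∧ _ := ⟨h0, hex⟩
    rw [digitCode, dif_pos h]
    have hspec := h.2.choose_spec.2
    by_cases hp : 0 < u i
    · simp only [digitDec, decide_eq_true hp, if_true, one_mul]
      rw [← hspec, abs_of_pos hp]
    · have hn : u i < 0 := lt_of_le_of_ne (not_lt.mp hp) h0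
      simp only [digitDec, decide_eq_false hp, Bool.false_eq_true, if_false]
      rw [← hspec, abs_of_neg hn]; ring

lemma digitCode_w {m d : ℕ} (c : ℝ) {u : Fin d → ℝ} (hu : u ∈ digitBall m d) (i : Fin d) :
    Real.exp (-c * (u i) ^ 2) = digitW c (digitCode m u i) := by
  by_cases h0 : u i = 0
  · simp [digitCode, h0, digitW]
  · have hex : ∃ ℓ : ℕ, ℓ ≤ m ∧ |u i| = ((2 : ℝ) ^ ℓ)⁻¹ ^ ((1 : ℝ) / 2) :=
      (hu.2 i).resolve_left h0
    have h : u i ≠ 0 ∧ _ := ⟨h0, hex⟩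
    rw [digitCode, dif_pos h]
    have hspec := h.2.choose_spec.2
    have hgen : ∀ n : ℕ, |u i| = ((2 : ℝ) ^ n)⁻¹ ^ ((1 : ℝ) / 2) →
        (u i) ^ 2 = ((2 : ℝ) ^ n)⁻¹ := by
      intro n hn
      rw [← sq_abs, hn,
        ← Real.rpow_natCast (((2 : ℝ) ^ n)⁻¹ ^ ((1 : ℝ) / 2)) 2,
        ← Real.rpow_mul (by positivity)]
      norm_num
    rw [hgen _ hspec]; rfl

lemma geom_half (n : ℕ) : ∑ k ∈ Finset.range n, ((1 : ℝ) / 2) ^ k ≤ 2 := by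
  rw [geom_sum_eq (by norm_num)]
  have h : (0:ℝ) ≤ ((1:ℝ)/2) ^ n := by positivity
  have he : (((1:ℝ)/2) ^ n - 1) / ((1:ℝ)/2 - 1) = 2 - 2 * ((1:ℝ)/2) ^ n := by ring
  rw [he]; linarith

lemma two_pow_clog_le (d : ℕ) (hd : 1 ≤ d) : 2 ^ Nat.clog 2 d ≤ 2 * d := by
  rcases Nat.lt_or_ge d 2 with h | h
  · interval_cases d
    · simp
  · have hm : 0 < Nat.clog 2 d := Nat.clog_pos one_lt_two h
    have hlt : 2 ^ (Nat.clog 2 d - 1) < d :=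
      (Nat.lt_clog_iff_pow_lt one_lt_two).mp (by omega)
    have heq : 2 ^ Nat.clog 2 d = 2 * 2 ^ (Nat.clog 2 d - 1) := by
      rw [← pow_succ']; congr 1; omega
    omega

lemma exp_digit_le {m d ℓ : ℕ} (hd : 1 ≤ d) (hm : m = Nat.clog 2 d) (hℓ : ℓ ≤ m) :
    Real.exp (-(4 * (d : ℝ)) * ((2 : ℝ) ^ ℓ)⁻¹) ≤ ((1 : ℝ) / 2) ^ (m - ℓ + 2) := by
  have h2d : (2 : ℝ) ^ m ≤ 2 * d := by
    have := two_pow_clog_le d hd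
    rw [← hm] at this
    exact_mod_cast this
  have hx : ((m : ℝ) - ℓ + 2) ≤ 4 * (d : ℝ) * ((2 : ℝ) ^ ℓ)⁻¹ := by
    have hpow : (2 : ℝ) ^ (m - ℓ + 1) ≤ 4 * (d : ℝ) * ((2 : ℝ) ^ ℓ)⁻¹ := by
      have hℓpos : (0 : ℝ) < 2 ^ ℓ := by positivity
      have hmul : (2 : ℝ) ^ (m - ℓ + 1) * 2 ^ ℓ ≤ 4 * d := by
        rw [← pow_add]
        have harith : m - ℓ + 1 + ℓ = m + 1 := by omega
        rw [harith, pow_succ]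
        linarith
      calc (2 : ℝ) ^ (m - ℓ + 1) = (2 ^ (m - ℓ + 1) * 2 ^ ℓ) * (2 ^ ℓ)⁻¹ := by
            field_simp
        _ ≤ 4 * (d : ℝ) * ((2 : ℝ) ^ ℓ)⁻¹ :=
            mul_le_mul_of_nonneg_right hmul (by positivity)
    have hnat : ((m : ℝ) - ℓ + 2) ≤ 2 ^ (m - ℓ + 1) := by
      have h1 : (m - ℓ) + 2 ≤ 2 ^ ((m - ℓ) + 1) := by
        have := Nat.lt_two_pow_self (n := m - ℓ + 1)
        omega
      have h2 : ((m : ℝ) - ℓ) = ((m - ℓ : ℕ) : ℝ) := by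
        have : ℓ ≤ m := hℓ
        push_cast [this]; ring
      rw [h2]
      exact_mod_cast h1
    linarith
  have e1 : Real.exp (-(4 * (d : ℝ)) * ((2 : ℝ) ^ ℓ)⁻¹) ≤
      Real.exp (-((m : ℝ) - ℓ + 2)) := by
    apply Real.exp_le_exp.mpr
    linarith
  refine e1.trans ?_
  have hee : Real.exp (-1) ≤ (1 : ℝ) / 2 := by
    rw [Real.exp_neg]
    rw [div_eq_mul_inv, one_mul]
    apply inv_anti₀ (by norm_num)
    have := Real.add_one_le_exp 1
    linarith
  have hrw : Real.exp (-((m : ℝ) - ℓ + 2)) = Real.exp (-1) ^ (m - ℓ + 2 : ℕ) := by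
    rw [← Real.exp_nat_mul]
    congr 1
    push_cast [hℓ]; ring
  rw [hrw]
  exact pow_le_pow_left₀ (Real.exp_nonneg _) hee _

lemma digitBall_card_le_aux (d : ℕ) (hd : 1 ≤ d) :
    ((digitBall (Nat.clog 2 d) d).ncard : ℝ) ≤ Real.exp ((21 / 4) * d) := by
  set m := Nat.clog 2 d with hm
  set B := digitBall m d with hB
  set c : ℝ := 4 * d with hc
  -- injectivity of the code on B
  have hinj : Set.InjOn (digitCode m) B := by
    intro u hu v hv huv
    funext i
    have := digitCode_dec hu i
    rw [huv] at this
    rw [← this, digitCode_dec hv i]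
  have hfin : B.Finite := Set.Finite.of_finite_image (Set.toFinite _) hinj
  have hcard : (B.ncard : ℝ) = (hfin.toFinset.card : ℝ) := by
    rw [Set.ncard_eq_toFinset_card _ hfin]
  rw [hcard]
  set F := hfin.toFinset with hF
  have hmemF : ∀ u ∈ F, u ∈ B := fun u hu => hfin.mem_toFinset.mp hu
  -- step 1: card ≤ weighted sum
  have step1 : (F.card : ℝ) ≤ ∑ u ∈ F, Real.exp (c * (1 - ∑ i, (u i) ^ 2)) := by
    have hc1 : (F.card : ℝ) = ∑ _u ∈ F, (1:ℝ) := by simp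
    rw [hc1]
    apply Finset.sum_le_sum
    intro u hu
    apply Real.one_le_exp
    have hu' := hmemF u hu
    have hnorm : ∑ i, (u i) ^ 2 ≤ 1 := by
      have h1 : _root_.enorm u ≤ 1 := hu'.1
      have h2 : (0:ℝ) ≤ ∑ i, (u i) ^ 2 := by positivity
      have := Real.sq_sqrt h2
      rw [_root_.enorm] at h1
      nlinarith [Real.sqrt_nonneg (∑ i, (u i) ^ 2)]
    have : (0:ℝ) ≤ c := by positivity
    nlinarith
  -- step 2: rewrite each weight as a product of digit weights
  have step2 : ∀ u ∈ F, Real.exp (c * (1 - ∑ i, (u i) ^ 2)) =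
      Real.exp c * ∏ i, digitW c (digitCode m u i) := by
    intro u hu
    have hu' := hmemF u hu
    have : c * (1 - ∑ i, (u i) ^ 2) = c + ∑ i, (-c * (u i) ^ 2) := by
      have hms : ∑ i, (-c * (u i) ^ 2) = -c * ∑ i, (u i) ^ 2 := by
        rw [Finset.mul_sum]
      rw [hms]; ring
    rw [this, Real.exp_add, Real.exp_sum]
    congr 1
    exact Finset.prod_congr rfl fun i _ => digitCode_w c hu' i
  -- step 3: sum over codes
  have hWnonneg : ∀ f : Fin d → Option (Fin (m + 1) × Bool),
      0 ≤ ∏ i, digitW c (f i) := by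
    intro f
    apply Finset.prod_nonneg
    intro i _
    cases hfi : f i with
    | none => simp [digitW]
    | some a => obtain ⟨ℓ, b⟩ := a; simp [digitW]; positivity
  have step3 : ∑ u ∈ F, ∏ i, digitW c (digitCode m u i) ≤
      ∑ f : Fin d → Option (Fin (m + 1) × Bool), ∏ i, digitW c (f i) := by
    rw [← Finset.sum_image (f := fun f => ∏ i, digitW c (f i))
      (g := digitCode m) (by
        intro x hx y hy hxy
        exact hinj (hmemF x hx) (hmemF y hy) hxy)]
    apply Finset.sum_le_sum_of_subset_of_nonneg (Finset.subset_univ _)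
    intro f _ _
    exact hWnonneg f
  -- step 4: factorize the sum over all codes
  have step4 : ∑ f : Fin d → Option (Fin (m + 1) × Bool), ∏ i, digitW c (f i)
      = (∑ a : Option (Fin (m + 1) × Bool), digitW c a) ^ d := by
    rw [Fintype.sum_pow (digitW c) d]
  -- step 5: bound the one-digit sum by 2
  have step5 : (∑ a : Option (Fin (m + 1) × Bool), digitW c a) ≤ 2 := by
    rw [Fintype.sum_option]
    have : ∑ a : Fin (m + 1) × Bool, digitW c (some a) =
        ∑ ℓ : Fin (m + 1), 2 * Real.exp (-c * ((2 : ℝ) ^ (ℓ : ℕ))⁻¹) := by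
      rw [Fintype.sum_prod_type]
      apply Finset.sum_congr rfl
      intro ℓ _
      first
      | (simp [digitW]; ring)
      | simp [digitW]
    rw [this]
    have hbound : ∑ ℓ : Fin (m + 1), 2 * Real.exp (-c * ((2 : ℝ) ^ (ℓ : ℕ))⁻¹) ≤ 1 := by
      have hle : ∀ ℓ : Fin (m + 1), 2 * Real.exp (-c * ((2 : ℝ) ^ (ℓ : ℕ))⁻¹) ≤
          2 * ((1 : ℝ) / 2) ^ (m - (ℓ : ℕ) + 2) := by
        intro ℓ
        have hℓ : (ℓ : ℕ) ≤ m := Nat.lt_succ_iff.mp ℓ.isLt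
        have := exp_digit_le hd hm hℓ
        rw [hc]
        linarith
      calc ∑ ℓ : Fin (m + 1), 2 * Real.exp (-c * ((2 : ℝ) ^ (ℓ : ℕ))⁻¹)
          ≤ ∑ ℓ : Fin (m + 1), 2 * ((1 : ℝ) / 2) ^ (m - (ℓ : ℕ) + 2) :=
            Finset.sum_le_sum fun ℓ _ => hle ℓ
        _ = ∑ k ∈ Finset.range (m + 1), 2 * ((1 : ℝ) / 2) ^ (m - k + 2) := by
            rw [Finset.sum_range fun k => 2 * ((1 : ℝ) / 2) ^ (m - k + 2)]
        _ = ∑ k ∈ Finset.range (m + 1), 2 * ((1 : ℝ) / 2) ^ (k + 2) := by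
            rw [← Finset.sum_range_reflect]
            apply Finset.sum_congr rfl
            intro k hk
            congr 2
            have := Finset.mem_range.mp hk
            omega
        _ ≤ 1 := by
            have h1 : ∑ k ∈ Finset.range (m + 1), 2 * ((1 : ℝ) / 2) ^ (k + 2) =
                (1 / 2) * ∑ k ∈ Finset.range (m + 1), ((1 : ℝ) / 2) ^ k := by
              rw [Finset.mul_sum]
              apply Finset.sum_congr rfl
              intro k _
              ring
            rw [h1]
            have := geom_half (m + 1)
            linarith
    have hnone : digitW (m := m) c none = 1 := rfl
    rw [hnone]
    linarith
  -- assemble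
  have hsumnonneg : (0:ℝ) ≤ ∑ a : Option (Fin (m + 1) × Bool), digitW c a := by
    apply Finset.sum_nonneg
    intro a _
    cases a with
    | none => simp [digitW]
    | some p => obtain ⟨ℓ, b⟩ := p; simp [digitW]; positivity
  have step6 : (∑ a : Option (Fin (m + 1) × Bool), digitW c a) ^ d ≤
      Real.exp ((5 / 4) * d) := by
    calc (∑ a : Option (Fin (m + 1) × Bool), digitW c a) ^ d ≤ 2 ^ d :=
          pow_le_pow_left₀ hsumnonneg step5 d
      _ ≤ Real.exp (5 / 4) ^ d := by
          apply pow_le_pow_left₀ (by norm_num)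
          have := Real.add_one_le_exp (5 / 4 : ℝ)
          linarith
      _ = Real.exp ((5 / 4) * d) := by
          rw [← Real.exp_nat_mul]; ring_nf
  calc (F.card : ℝ) ≤ ∑ u ∈ F, Real.exp (c * (1 - ∑ i, (u i) ^ 2)) := step1
    _ = Real.exp c * ∑ u ∈ F, ∏ i, digitW c (digitCode m u i) := by
        rw [Finset.sum_congr rfl step2, ← Finset.mul_sum]
    _ ≤ Real.exp c * Real.exp ((5 / 4) * d) := by
        apply mul_le_mul_of_nonneg_left _ (Real.exp_nonneg c)
        calc ∑ u ∈ F, ∏ i, digitW c (digitCode m u i)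
            ≤ ∑ f : Fin d → Option (Fin (m + 1) × Bool), ∏ i, digitW c (f i) := step3
          _ = (∑ a : Option (Fin (m + 1) × Bool), digitW c a) ^ d := step4
          _ ≤ Real.exp ((5 / 4) * d) := step6
    _ = Real.exp ((21 / 4) * d) := by
        rw [← Real.exp_add, hc]; ring_nf

theorem digitBall_card_le (d1 d2 d3 : ℕ) (h1 : 1 ≤ d1) (h2 : 1 ≤ d2) (h3 : 1 ≤ d3) :
    (∀ dj : ℕ, 1 ≤ dj →
      ((digitBall (Nat.clog 2 dj) dj).ncard : ℝ) ≤ Real.exp ((21 / 4) * dj)) ∧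
    ((digitBall (Nat.clog 2 d1) d1).ncard : ℝ) *
      ((digitBall (Nat.clog 2 d2) d2).ncard : ℝ) *
      ((digitBall (Nat.clog 2 d3) d3).ncard : ℝ)
      ≤ Real.exp ((21 / 4) * (d1 + d2 + d3)) := by
  refine ⟨fun dj hdj => digitBall_card_le_aux dj hdj, ?_⟩
  have e1 := digitBall_card_le_aux d1 h1
  have e2 := digitBall_card_le_aux d2 h2
  have e3 := digitBall_card_le_aux d3 h3
  have n1 : (0:ℝ) ≤ ((digitBall (Nat.clog 2 d1) d1).ncard : ℝ) := Nat.cast_nonneg _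
  have n2 : (0:ℝ) ≤ ((digitBall (Nat.clog 2 d2) d2).ncard : ℝ) := Nat.cast_nonneg _
  have n3 : (0:ℝ) ≤ ((digitBall (Nat.clog 2 d3) d3).ncard : ℝ) := Nat.cast_nonneg _
  calc ((digitBall (Nat.clog 2 d1) d1).ncard : ℝ) *
        ((digitBall (Nat.clog 2 d2) d2).ncard : ℝ) *
        ((digitBall (Nat.clog 2 d3) d3).ncard : ℝ)
      ≤ Real.exp ((21 / 4) * d1) * Real.exp ((21 / 4) * d2) * Real.exp ((21 / 4) * d3) := by
        apply mul_le_mul (mul_le_mul e1 e2 n2 (Real.exp_nonneg _)) e3 n3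
        positivity
    _ = Real.exp ((21 / 4) * (d1 + d2 + d3)) := by
        rw [← Real.exp_add, ← Real.exp_add]
        push_cast
        ring_nf
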